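/- For every real number w > 32/π³, one has −(1/2)·log w − log(8π) < log I₀(w) − w < 0. In particular, log I₀(w) − w = O(log w) as w → +∞. -/

import Mathlib

open Real

/-- The modified Bessel function of the first kind of order zero,
`I0(w) = sum_k w^(2k) / (4^k (k!)^2)`. -/
noncomputable def besselI0 (w : ℝ) : ℝ :=
  ∑' k : ℕ, w ^ (2 * k) / (4 ^ k * (k.factorial : ℝ) ^ 2)

/-- The modified Bessel function of the first kind of order one (the derivative of `besselI0`),
`I1(w) = sum_k w^(2k+1) / (2^(2k+1) k! (k+1)!)`. -/
noncomputable def besselI1 (w : ℝ) : ℝ :=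
  ∑' k : ℕ, w ^ (2 * k + 1) / (2 ^ (2 * k + 1) * (k.factorial : ℝ) * ((k + 1).factorial : ℝ))

namespace BesselAux

lemma hasSum_exp (x : ℝ) :
    HasSum (fun k : ℕ => x ^ k / (k.factorial : ℝ)) (Real.exp x) := by
  have h := NormedSpace.expSeries_div_hasSum_exp x
  rwa [← Real.exp_eq_exp_ℝ] at h

lemma hasSum_m1 (x : ℝ) :
    HasSum (fun k : ℕ => (k : ℝ) * (x ^ k / (k.factorial : ℝ))) (x * Real.exp x) := by
  set f : ℕ → ℝ := fun k => (k : ℝ) * (x ^ k / (k.factorial : ℝ)) with hf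
  have h : (fun n : ℕ => f (n + 1)) = fun n : ℕ => x * (x ^ n / (n.factorial : ℝ)) := by
    funext n
    have h2 : ((n.factorial : ℝ)) ≠ 0 := Nat.cast_ne_zero.mpr n.factorial_ne_zero
    simp only [hf, Nat.factorial_succ]
    push_cast
    field_simp
    ring
  have h0 : HasSum (fun n : ℕ => f (n + 1)) (x * Real.exp x) := by
    rw [h]; exact (hasSum_exp x).mul_left x
  have h4 := (hasSum_nat_add_iff (f := f) 1).mp h0
  simpa [hf] using h4

lemma hasSum_m2 (x : ℝ) :
    HasSum (fun k : ℕ => (k : ℝ) * ((k : ℝ) - 1) * (x ^ k / (k.factorial : ℝ)))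
      (x ^ 2 * Real.exp x) := by
  set f : ℕ → ℝ := fun k => (k : ℝ) * ((k : ℝ) - 1) * (x ^ k / (k.factorial : ℝ)) with hf
  have h : (fun n : ℕ => f (n + 2)) = fun n : ℕ => x ^ 2 * (x ^ n / (n.factorial : ℝ)) := by
    funext n
    have h2 : ((n.factorial : ℝ)) ≠ 0 := Nat.cast_ne_zero.mpr n.factorial_ne_zero
    have hfac : (n + 2).factorial = (n + 2) * ((n + 1) * n.factorial) := by
      rw [show n + 2 = (n + 1) + 1 from rfl, Nat.factorial_succ, Nat.factorial_succ]
    simp only [hf, hfac]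
    push_cast
    field_simp
    ring
  have h0 : HasSum (fun n : ℕ => f (n + 2)) (x ^ 2 * Real.exp x) := by
    rw [h]; exact (hasSum_exp x).mul_left (x ^ 2)
  have h4 := (hasSum_nat_add_iff (f := f) 2).mp h0
  have h5 : ∑ i ∈ Finset.range 2, f i = 0 := by
    simp [hf, Finset.sum_range_succ]
  rw [h5, add_zero] at h4
  exact h4

lemma hasSum_cheb (x : ℝ) :
    HasSum (fun k : ℕ => ((k : ℝ) - x) ^ 2 * (x ^ k / (k.factorial : ℝ)))
      (x * Real.exp x) := by
  have h := ((hasSum_m2 x).add (hasSum_m1 x)).add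
    (((hasSum_m1 x).mul_left (-(2 * x))).add ((hasSum_exp x).mul_left (x ^ 2)))
  have hfun : (fun k : ℕ => ((k : ℝ) - x) ^ 2 * (x ^ k / (k.factorial : ℝ)))
      = fun k : ℕ =>
        ((k : ℝ) * ((k : ℝ) - 1) * (x ^ k / (k.factorial : ℝ))
          + (k : ℝ) * (x ^ k / (k.factorial : ℝ)))
        + (-(2 * x) * ((k : ℝ) * (x ^ k / (k.factorial : ℝ)))
          + x ^ 2 * (x ^ k / (k.factorial : ℝ))) := by
    funext k; ring
  have hval : x * Real.exp x
      = (x ^ 2 * Real.exp x + x * Real.exp x)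
        + (-(2 * x) * (x * Real.exp x) + x ^ 2 * Real.exp x) := by ring
  rw [hfun, hval]
  exact h

lemma besselI0_lower {w : ℝ} (hw : 1 ≤ w) :
    Real.exp w * (9 / 80) / Real.sqrt w ≤ besselI0 w := by
  have hw0 : (0 : ℝ) < w := by linarith
  set l : ℝ := w / 2 with hl
  have hl0 : 0 < l := by rw [hl]; linarith
  set s : ℝ := Real.sqrt l with hs
  have hs0 : 0 < s := Real.sqrt_pos.mpr hl0
  have hs2 : s ^ 2 = l := Real.sq_sqrt hl0.le
  set b : ℕ → ℝ := fun k => l ^ k / (k.factorial : ℝ) with hb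
  have hbpos : ∀ k, 0 < b k := fun k => by
    simp only [hb]; positivity
  have hbs : HasSum b (Real.exp l) := hasSum_exp l
  have hsm : Summable b := hbs.summable
  have hcheb : HasSum (fun k : ℕ => ((k : ℝ) - l) ^ 2 * b k) (l * Real.exp l) :=
    hasSum_cheb l
  set A : ℕ := ⌈l - 2 * s⌉₊ with hA
  set B : ℕ := ⌊l + 2 * s⌋₊ with hB
  set F : Finset ℕ := Finset.Icc A B with hF
  -- outside the window, (k - l)^2 ≥ 4l
  have hout : ∀ k : ℕ, k ∉ F → 4 * l ≤ ((k : ℝ) - l) ^ 2 := by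
    intro k hk
    rw [hF, Finset.mem_Icc, not_and_or, not_le, not_le] at hk
    rcases hk with hk | hk
    · have hApos : 0 < A := Nat.pos_of_ne_zero (by omega)
      have hca : 0 < l - 2 * s := Nat.ceil_pos.mp hApos
      have h1 : (A : ℝ) < (l - 2 * s) + 1 := Nat.ceil_lt_add_one hca.le
      have h2 : (k : ℝ) + 1 ≤ (A : ℝ) := by exact_mod_cast Nat.succ_le_of_lt hk
      nlinarith
    · have h1 : l + 2 * s < (B : ℝ) + 1 := Nat.lt_floor_add_one _
      have h2 : (B : ℝ) + 1 ≤ (k : ℝ) := by exact_mod_cast Nat.succ_le_of_lt hk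
      nlinarith
  -- the window has at most 4s+1 elements
  have hcard : (F.card : ℝ) ≤ 4 * s + 1 := by
    rcases le_or_gt A B with h | h
    · have hcn : F.card = B + 1 - A := by rw [hF, Nat.card_Icc]
      have hAB : A ≤ B + 1 := by omega
      have hc : (F.card : ℝ) = (B : ℝ) + 1 - (A : ℝ) := by
        rw [hcn, Nat.cast_sub hAB]; push_cast; ring
      have h1 : (B : ℝ) ≤ l + 2 * s := Nat.floor_le (by nlinarith)
      have h2 : l - 2 * s ≤ (A : ℝ) := Nat.le_ceil _
      rw [hc]; linarith
    · have hFe : F = ∅ := by rw [hF]; exact Finset.Icc_eq_empty (by omega)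
      rw [hFe]
      simp only [Finset.card_empty, Nat.cast_zero]
      positivity
  -- Chebyshev tail bound: the sum over the window is at least (3/4) e^l
  have hsum_g : HasSum (fun k : ℕ => ((k : ℝ) - l) ^ 2 * b k / (4 * l)) (Real.exp l / 4) := by
    have h := hcheb.div_const (4 * l)
    have : l * Real.exp l / (4 * l) = Real.exp l / 4 := by
      field_simp
    rwa [this] at h
  have key : (3 / 4) * Real.exp l ≤ ∑ k ∈ F, b k := by
    have hsplit := Summable.sum_add_tsum_compl (s := F) hsm
    rw [hbs.tsum_eq] at hsplit
    have hgsum : Summable (fun k : ℕ => ((k : ℝ) - l) ^ 2 * b k / (4 * l)) :=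
      hsum_g.summable
    have h1 : (∑' k : ((F : Set ℕ)ᶜ : Set ℕ), b k)
        ≤ ∑' k : ((F : Set ℕ)ᶜ : Set ℕ), ((k : ℝ) - l) ^ 2 * b (k : ℕ) / (4 * l) := by
      apply Summable.tsum_le_tsum _ (hsm.subtype _) (hgsum.subtype _)
      rintro ⟨k, hk⟩
      simp only [Set.mem_compl_iff, Finset.mem_coe] at hk
      have h4 := hout k hk
      simp only [Function.comp_apply]
      rw [le_div_iff₀ (by positivity)]
      nlinarith [(hbpos k).le]
    have h2 : (∑' k : ((F : Set ℕ)ᶜ : Set ℕ), ((k : ℝ) - l) ^ 2 * b (k : ℕ) / (4 * l))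
        ≤ Real.exp l / 4 := by
      have hsplit2 := Summable.sum_add_tsum_compl (s := F) hgsum
      rw [hsum_g.tsum_eq] at hsplit2
      have hpos : 0 ≤ ∑ k ∈ F, ((k : ℝ) - l) ^ 2 * b k / (4 * l) := by
        apply Finset.sum_nonneg; intro i _
        have := (hbpos i).le
        positivity
      linarith
    linarith
  -- identify besselI0 with the sum of squares
  have haeq : ∀ k : ℕ, w ^ (2 * k) / (4 ^ k * (k.factorial : ℝ) ^ 2) = (b k) ^ 2 := by
    intro k
    have hfk : ((k.factorial : ℝ)) ≠ 0 := Nat.cast_ne_zero.mpr k.factorial_ne_zero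
    simp only [hb, hl]
    rw [div_pow, ← pow_mul, mul_comm k 2, div_pow, div_div]
    congr 2
    rw [pow_mul]
    norm_num
  have hI : besselI0 w = ∑' k : ℕ, (b k) ^ 2 := by
    unfold besselI0
    congr 1
    funext k
    exact haeq k
  have hsq : Summable (fun k : ℕ => (b k) ^ 2) := by
    apply Summable.of_nonneg_of_le (fun k => by positivity) (fun k => ?_)
      (hsm.mul_left (Real.exp l))
    have hk : b k ≤ Real.exp l := by
      have := Summable.le_tsum hsm k (fun j _ => (hbpos j).le)
      rwa [hbs.tsum_eq] at this
    nlinarith [hbpos k]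
  have hFsum : ∑ k ∈ F, (b k) ^ 2 ≤ besselI0 w := by
    rw [hI]
    exact Summable.sum_le_tsum F (fun i _ => by positivity) hsq
  have hIpos : 0 ≤ besselI0 w := by
    rw [hI]; exact tsum_nonneg fun k => by positivity
  -- Cauchy–Schwarz
  have hCS : (∑ k ∈ F, b k) ^ 2 ≤ (F.card : ℝ) * ∑ k ∈ F, (b k) ^ 2 :=
    sq_sum_le_card_mul_sum_sq
  have hpos1 : 0 ≤ ∑ k ∈ F, (b k) ^ 2 :=
    Finset.sum_nonneg fun i _ => by positivity
  have hEw : Real.exp l * Real.exp l = Real.exp w := by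
    rw [← Real.exp_add]; congr 1; rw [hl]; ring
  have hchain : (9 / 16) * Real.exp w ≤ besselI0 w * (4 * s + 1) := by
    calc (9 / 16) * Real.exp w = (3 / 4 * Real.exp l) ^ 2 := by
          rw [← hEw]; ring
      _ ≤ (∑ k ∈ F, b k) ^ 2 := by nlinarith [Real.exp_pos l]
      _ ≤ (F.card : ℝ) * ∑ k ∈ F, (b k) ^ 2 := hCS
      _ ≤ (4 * s + 1) * ∑ k ∈ F, (b k) ^ 2 := mul_le_mul_of_nonneg_right hcard hpos1
      _ ≤ (4 * s + 1) * besselI0 w := mul_le_mul_of_nonneg_left hFsum (by positivity)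
      _ = besselI0 w * (4 * s + 1) := mul_comm _ _
  have hsle : s ≤ Real.sqrt w := by
    rw [hs]; exact Real.sqrt_le_sqrt (by rw [hl]; linarith)
  have h1w : 1 ≤ Real.sqrt w := by
    have := Real.sqrt_le_sqrt hw
    rwa [Real.sqrt_one] at this
  have hwpos : 0 < Real.sqrt w := by linarith
  rw [div_le_iff₀ hwpos]
  have h5 : besselI0 w * (4 * s + 1) ≤ besselI0 w * (5 * Real.sqrt w) :=
    mul_le_mul_of_nonneg_left (by linarith) hIpos
  nlinarith [hchain]

lemma two_mul_fact_le (k : ℕ) :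
    ((2 * k).factorial : ℝ) ≤ 4 ^ k * ((k.factorial : ℝ)) ^ 2 := by
  induction k with
  | zero => norm_num
  | succ n ih =>
    have h1 : (2 * (n + 1)).factorial = (2 * n + 2) * ((2 * n + 1) * (2 * n).factorial) := by
      have h : 2 * (n + 1) = (2 * n + 1) + 1 := by ring
      rw [h, Nat.factorial_succ, Nat.factorial_succ]
    have h2 : ((2 * (n + 1)).factorial : ℝ)
        = ((2 : ℝ) * n + 2) * ((2 * n + 1)) * ((2 * n).factorial : ℝ) := by
      rw [h1]; push_cast; ring
    have h3 : (((n + 1).factorial : ℝ)) = ((n : ℝ) + 1) * (n.factorial : ℝ) := by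
      rw [Nat.factorial_succ]; push_cast; ring
    have hn0 : (0 : ℝ) ≤ ((2 * n).factorial : ℝ) := by positivity
    have hnn : (0 : ℝ) ≤ (n : ℝ) := Nat.cast_nonneg n
    have hfn : (0 : ℝ) ≤ (n.factorial : ℝ) := by positivity
    rw [h2, h3]
    have hq : ((2 : ℝ) * n + 2) * (2 * n + 1) ≤ 4 * ((n : ℝ) + 1) ^ 2 := by nlinarith
    calc ((2 : ℝ) * n + 2) * ((2 * n + 1)) * ((2 * n).factorial : ℝ)
        ≤ 4 * ((n : ℝ) + 1) ^ 2 * (4 ^ n * ((n.factorial : ℝ)) ^ 2) := by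
          nlinarith [mul_le_mul_of_nonneg_left ih
            (by nlinarith : (0 : ℝ) ≤ ((2 : ℝ) * n + 2) * (2 * n + 1))]
      _ = 4 ^ (n + 1) * ((((n : ℝ) + 1) * (n.factorial : ℝ))) ^ 2 := by ring
  -- done

lemma besselI0_upper {w : ℝ} (hw : 0 < w) : besselI0 w < Real.exp w := by
  have hpt : ∀ k : ℕ, w ^ (2 * k) / (4 ^ k * (k.factorial : ℝ) ^ 2)
      ≤ w ^ (2 * k) / ((2 * k).factorial : ℝ) := by
    intro k
    have h1 := two_mul_fact_le k
    have h2 : (0 : ℝ) < ((2 * k).factorial : ℝ) := by positivity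
    gcongr
  have hg : HasSum (fun n : ℕ => w ^ n / (n.factorial : ℝ)) (Real.exp w) := hasSum_exp w
  have hinj2 : Function.Injective (fun k : ℕ => 2 * k) := fun a b h => by simp only [] at h; omega
  have hinj2' : Function.Injective (fun k : ℕ => 2 * k + 1) := fun a b h => by simp only [] at h; omega
  have hge : Summable (fun k : ℕ => w ^ (2 * k) / ((2 * k).factorial : ℝ)) := by
    have := hg.summable.comp_injective hinj2
    simpa [Function.comp_def] using this
  have hgo : Summable (fun k : ℕ => w ^ (2 * k + 1) / ((2 * k + 1).factorial : ℝ)) := by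
    have := hg.summable.comp_injective hinj2'
    simpa [Function.comp_def] using this
  have hAB : (∑' k : ℕ, w ^ (2 * k) / ((2 * k).factorial : ℝ))
      + (∑' k : ℕ, w ^ (2 * k + 1) / ((2 * k + 1).factorial : ℝ)) = Real.exp w := by
    have h := HasSum.even_add_odd (f := fun n : ℕ => w ^ n / (n.factorial : ℝ))
      hge.hasSum hgo.hasSum
    exact h.unique hg
  have hBpos : 0 < ∑' k : ℕ, w ^ (2 * k + 1) / ((2 * k + 1).factorial : ℝ) := by
    apply Summable.tsum_pos hgo (fun i => by positivity) 0
    positivity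
  have hsum0 : Summable (fun k : ℕ => w ^ (2 * k) / (4 ^ k * (k.factorial : ℝ) ^ 2)) := by
    apply Summable.of_nonneg_of_le (fun k => by positivity) hpt hge
  have hup : besselI0 w ≤ ∑' k : ℕ, w ^ (2 * k) / ((2 * k).factorial : ℝ) := by
    unfold besselI0
    exact Summable.tsum_le_tsum hpt hsum0 hge
  linarith

end BesselAux

/-- For every `w > 32/π^3`, `−(1/2) log w − log(8π) < log I0(w) − w < 0`; in particular,
`log I0(w) − w = O(log w)` as `w → +∞`. -/
theorem log_besselI0_sub_self_bounds :
    (∀ w : ℝ, 32 / Real.pi ^ 3 < w →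
      -(1 / 2) * Real.log w - Real.log (8 * Real.pi) < Real.log (besselI0 w) - w ∧
        Real.log (besselI0 w) - w < 0) ∧
    (fun w : ℝ => Real.log (besselI0 w) - w) =O[Filter.atTop] Real.log := by
  have key : ∀ w : ℝ, 1 ≤ w →
      (-(1 / 2) * Real.log w - Real.log (8 * Real.pi) < Real.log (besselI0 w) - w ∧
        Real.log (besselI0 w) - w < 0) := by
    intro w hw
    have hw0 : (0 : ℝ) < w := by linarith
    have hlow := BesselAux.besselI0_lower hw
    have hup := BesselAux.besselI0_upper hw0
    have hsw : 0 < Real.sqrt w := Real.sqrt_pos.mpr hw0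
    have hIpos : 0 < besselI0 w := lt_of_lt_of_le (by positivity) hlow
    constructor
    · have hstrict : Real.exp w / (8 * Real.pi * Real.sqrt w) < besselI0 w := by
        have h8 : Real.exp w / (8 * Real.pi * Real.sqrt w)
            < Real.exp w * (9 / 80) / Real.sqrt w := by
          rw [div_lt_div_iff₀ (by positivity) hsw]
          nlinarith [mul_pos (Real.exp_pos w) hsw, Real.pi_gt_three]
        linarith
      have hlog := Real.log_lt_log (by positivity) hstrict
      rw [Real.log_div (Real.exp_ne_zero w) (by positivity), Real.log_exp,
        Real.log_mul (by positivity) (ne_of_gt hsw), Real.log_sqrt hw0.le] at hlog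
      linarith
    · have h := Real.log_lt_log hIpos hup
      rw [Real.log_exp] at h
      linarith
  constructor
  · intro w hw
    apply key
    have hp : Real.pi < 3.15 := Real.pi_lt_d2
    have hp0 : 0 < Real.pi := Real.pi_pos
    have hp2 : Real.pi ^ 2 < 10 := by nlinarith
    have hpi3 : Real.pi ^ 3 < 32 := by nlinarith
    have h1 : (1 : ℝ) ≤ 32 / Real.pi ^ 3 := by
      rw [le_div_iff₀ (by positivity)]
      linarith
    linarith
  · rw [Asymptotics.isBigO_iff]
    refine ⟨2, ?_⟩
    filter_upwards [Filter.eventually_ge_atTop (27 : ℝ)] with w hw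
    have h := key w (by linarith)
    have hlw : 0 < Real.log w := Real.log_pos (by linarith)
    have h8 : Real.log (8 * Real.pi) ≤ Real.log w := by
      apply Real.log_le_log (by positivity)
      nlinarith [Real.pi_lt_d2]
    rw [Real.norm_eq_abs, Real.norm_eq_abs, abs_of_pos hlw]
    rw [abs_le]
    constructor
    · linarith [h.1]
    · linarith [h.2]
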